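/- Let C be a positive self-adjoint compact operator on a Hilbert space with eigenvalues σ_j² (σ_j ≥ 0) and spectral decomposition C = Σ_j σ_j² h_j⊗h_j, C_γ = C + γI for γ > 0, and let B be a bounded operator satisfying B B* ⪯ a² C^{1+α} for some a > 0 and α ∈ [1,2]. Then ‖(C_γ^{-1} − C^†) B‖² ≤ a² γ^{α−1}, where C^† is the Moore–Penrose pseudoinverse of C. -/

import Mathlib

open scoped InnerProductSpace

lemma aux_scalar {s γ α : ℝ} (hs : 0 ≤ s) (hγ : 0 < γ) (hα1 : 1 ≤ α) (hα2 : α ≤ 2) :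
    (s^2) ^ ((1:ℝ)+α) * ((s^2+γ)⁻¹ - (if s = 0 then 0 else (s^2)⁻¹))^2 ≤ γ ^ (α-1) := by
  rcases eq_or_lt_of_le hs with h0 | h0
  · rw [if_pos h0.symm, ← h0]
    norm_num [Real.zero_rpow (show (1:ℝ)+α ≠ 0 by linarith)]
    exact Real.rpow_nonneg hγ.le _
  · have hne : s ≠ 0 := ne_of_gt h0
    rw [if_neg hne]
    set t := s^2 with ht'
    have ht : 0 < t := by positivity
    have htγ : 0 < t + γ := by linarith
    have hd : (t+γ)⁻¹ - t⁻¹ = -(γ / (t*(t+γ))) := by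
      field_simp
      ring
    rw [hd]
    have h2 : t ^ ((1:ℝ)+α) = t^(α-1) * t^2 := by
      rw [← Real.rpow_natCast t 2, ← Real.rpow_add ht]
      ring_nf
    have hkey : t^(α-1) * γ^(3-α) ≤ (t+γ)^2 := by
      have h1 : t^(α-1) ≤ (t+γ)^(α-1) :=
        Real.rpow_le_rpow ht.le (by linarith) (by linarith)
      have h2' : γ^(3-α) ≤ (t+γ)^(3-α) :=
        Real.rpow_le_rpow hγ.le (by linarith) (by linarith)
      have he : (α-1)+(3-α) = ((2:ℕ):ℝ) := by push_cast; ring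
      calc t^(α-1) * γ^(3-α) ≤ (t+γ)^(α-1) * (t+γ)^(3-α) :=
            mul_le_mul h1 h2' (Real.rpow_nonneg hγ.le _) (Real.rpow_nonneg htγ.le _)
        _ = (t+γ)^((α-1)+(3-α)) := (Real.rpow_add htγ _ _).symm
        _ = (t+γ)^2 := by rw [he, Real.rpow_natCast]
    have hγ2 : γ^(2:ℕ) = γ^(α-1) * γ^(3-α) := by
      rw [← Real.rpow_add hγ]
      have he : (α-1)+(3-α) = ((2:ℕ):ℝ) := by push_cast; ring
      rw [he, Real.rpow_natCast]
    rw [h2, neg_sq, div_pow]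
    have hre : t^(α-1) * t^2 * (γ^2 / (t*(t+γ))^2) =
        (t^(α-1) * t^2 * γ^2) / (t^2*(t+γ)^2) := by
      rw [mul_pow]; ring
    rw [hre, div_le_iff₀ (by positivity : (0:ℝ) < (t^2 * (t+γ)^2))]
    calc t^(α-1) * t^2 * γ^2 = (t^(α-1) * γ^(3-α)) * γ^(α-1) * t^2 := by
          rw [hγ2]; ring
      _ ≤ (t+γ)^2 * γ^(α-1) * t^2 := by
          gcongr (?_ * γ^(α-1) * t^2)
      _ = γ^(α-1) * (t^2 * (t+γ)^2) := by ring
open scoped InnerProductSpace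

lemma aux_hasSum {H : Type*} [NormedAddCommGroup H] [InnerProductSpace ℂ H] [CompleteSpace H]
    (h : ℕ → H) (hOn : Orthonormal ℂ h) (lam : ℕ → ℝ) (T : H →L[ℂ] H)
    (hT : ∀ x : H, T x = ∑' j : ℕ, ((lam j : ℝ) : ℂ) • ⟪h j, x⟫_ℂ • h j) (y : H) :
    HasSum (fun j => lam j * ‖⟪h j, y⟫_ℂ‖^2) (Complex.re ⟪y, T y⟫_ℂ) := by
  classical
  set g : ℕ → H := fun j => ((lam j : ℝ) : ℂ) • ⟪h j, y⟫_ℂ • h j with hg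
  set f : ℕ → H := fun j => ⟪h j, y⟫_ℂ • h j with hf
  have hfs : Summable f := by
    have := (hOn.orthogonalFamily.summable_iff_norm_sq_summable
      (fun i => ⟪h i, y⟫_ℂ)).mpr (by simpa using hOn.inner_products_summable (x := y))
    simpa [LinearIsometry.toSpanSingleton_apply] using this
  obtain ⟨P, hP⟩ := hfs
  have hin : ∀ (i : ℕ) (F : Finset ℕ),
      ⟪h i, ∑ j ∈ F, f j⟫_ℂ = if i ∈ F then ⟪h i, y⟫_ℂ else 0 := by
    intro i F
    rw [inner_sum]
    simp [hf, inner_smul_right, orthonormal_iff_ite.mp hOn, Finset.sum_ite_eq]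
  have hgP : HasSum g (T P) := by
    have h1 : Filter.Tendsto (fun F : Finset ℕ => T (∑ j ∈ F, f j))
        Filter.atTop (nhds (T P)) := (T.continuous.tendsto P).comp hP
    rw [HasSum]
    refine h1.congr (fun F => ?_)
    rw [hT]
    rw [tsum_eq_sum (s := F) (fun i hi => by simp [hin, if_neg hi])]
    exact Finset.sum_congr rfl fun i hi => by simp [hin, if_pos hi, hg]
  have hgT : HasSum g (T y) := by
    have : T y = T P := by rw [hT y, hgP.tsum_eq]
    rw [this]; exact hgP
  have h2 : HasSum (fun j => ⟪y, g j⟫_ℂ) ⟪y, T y⟫_ℂ := (innerSL ℂ y).hasSum hgT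
  have h3 : ∀ j, ⟪y, g j⟫_ℂ = ((lam j * ‖⟪h j, y⟫_ℂ‖^2 : ℝ) : ℂ) := by
    intro j
    simp only [hg, inner_smul_right, ← inner_conj_symm (h j) y]
    rw [mul_comm ((starRingEnd ℂ) ⟪y, h j⟫_ℂ), Complex.mul_conj, Complex.normSq_eq_norm_sq]
    push_cast
    simp only [Complex.norm_conj]
  rw [show (fun j => ⟪y, g j⟫_ℂ) = fun j => ((lam j * ‖⟪h j, y⟫_ℂ‖^2 : ℝ) : ℂ) from
    funext h3] at h2
  have h4 := Complex.reCLM.hasSum h2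
  simp only [Complex.reCLM_apply, Complex.ofReal_re] at h4
  exact h4

theorem pseudoinverse_bias_bound
    {H : Type*} [NormedAddCommGroup H] [InnerProductSpace ℂ H] [CompleteSpace H]
    (h : ℕ → H) (hOn : Orthonormal ℂ h)
    (σ : ℕ → ℝ) (hσ : ∀ j, 0 ≤ σ j)
    (C : H →L[ℂ] H)
    (hC : ∀ x : H, C x = ∑' j : ℕ, (((σ j) ^ 2 : ℝ) : ℂ) • ⟪h j, x⟫_ℂ • h j)
    (γ : ℝ) (hγ : 0 < γ)
    (Cγinv : H →L[ℂ] H)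
    (hCγ1 : (C + (γ : ℂ) • (1 : H →L[ℂ] H)) * Cγinv = 1)
    (hCγ2 : Cγinv * (C + (γ : ℂ) • (1 : H →L[ℂ] H)) = 1)
    (Cdag : H →L[ℂ] H)
    (hCdag : ∀ x : H, Cdag x =
      ∑' j : ℕ, (if σ j = 0 then (0 : ℂ) else ((((σ j) ^ 2)⁻¹ : ℝ) : ℂ)) • ⟪h j, x⟫_ℂ • h j)
    (a α : ℝ) (ha : 0 < a) (hα : α ∈ Set.Icc (1 : ℝ) 2)
    (Cpow : H →L[ℂ] H)
    (hCpow : ∀ x : H, Cpow x =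
      ∑' j : ℕ, (((((σ j) ^ 2) ^ ((1 : ℝ) + α) : ℝ)) : ℂ) • ⟪h j, x⟫_ℂ • h j)
    (B : H →L[ℂ] H)
    (hBB : (((a ^ 2 : ℝ) : ℂ) • Cpow - B * ContinuousLinearMap.adjoint B).IsPositive) :
    ‖(Cγinv - Cdag) * B‖ ^ 2 ≤ a ^ 2 * γ ^ (α - 1) := by
  obtain ⟨hα1, hα2⟩ := hα
  classical
  have horth := orthonormal_iff_ite.mp hOn
  -- evaluation of the spectral sums on eigenvectors
  have hsingle : ∀ (c : ℕ → ℂ) (j : ℕ),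
      (∑' i, c i • ⟪h i, h j⟫_ℂ • h i) = c j • h j := by
    intro c j
    rw [tsum_eq_single j (fun i hij => by simp [horth i j, if_neg hij])]
    simp [horth j j, hOn.1 j]
  have hCh : ∀ j, C (h j) = (((σ j)^2 : ℝ) : ℂ) • h j := fun j => by
    rw [hC, hsingle]
  have hCdagh : ∀ j, Cdag (h j) =
      (if σ j = 0 then (0:ℂ) else ((((σ j)^2)⁻¹ : ℝ) : ℂ)) • h j := fun j => by
    rw [hCdag, hsingle]
  have hCγh : ∀ j, Cγinv (h j) = (((((σ j)^2 + γ)⁻¹ : ℝ)) : ℂ) • h j := by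
    intro j
    have hcpos : (0:ℝ) < (σ j)^2 + γ := by positivity
    have hcne : (((σ j)^2 + γ : ℝ) : ℂ) ≠ 0 := by
      exact_mod_cast ne_of_gt hcpos
    have h1 : (C + (γ:ℂ) • (1 : H →L[ℂ] H)) (h j) = (((σ j)^2 + γ : ℝ):ℂ) • h j := by
      simp only [ContinuousLinearMap.add_apply, ContinuousLinearMap.smul_apply,
        ContinuousLinearMap.one_apply, hCh]
      rw [← add_smul]
      norm_cast
    have h2 : Cγinv ((C + (γ:ℂ) • (1 : H →L[ℂ] H)) (h j)) = h j := by
      rw [← ContinuousLinearMap.mul_apply, hCγ2, ContinuousLinearMap.one_apply]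
    rw [h1, map_smul] at h2
    have h3 := congrArg (fun z => ((((σ j)^2 + γ : ℝ):ℂ))⁻¹ • z) h2
    simp only [smul_smul, inv_mul_cancel₀ hcne, one_smul] at h3
    rw [h3, ← Complex.ofReal_inv]
  set dd : ℕ → ℝ := fun j => ((σ j)^2+γ)⁻¹ - (if σ j = 0 then 0 else ((σ j)^2)⁻¹) with hdd
  set A : H →L[ℂ] H := Cγinv - Cdag with hA
  have hAh : ∀ j, A (h j) = ((dd j : ℝ) : ℂ) • h j := by
    intro j
    rw [hA, ContinuousLinearMap.sub_apply, hCγh, hCdagh, ← sub_smul]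
    congr 1
    simp [hdd, apply_ite Complex.ofReal]
  set lam : ℕ → ℝ := fun j => ((σ j)^2) ^ ((1:ℝ)+α) with hlam
  -- key pointwise bound
  have main : ∀ x : H, ‖(ContinuousLinearMap.adjoint B) ((ContinuousLinearMap.adjoint A) x)‖^2 ≤
      (a^2 * γ^(α-1)) * ‖x‖^2 := by
    intro x
    set y := (ContinuousLinearMap.adjoint A) x with hy
    have hcomp : ∀ j, ⟪h j, y⟫_ℂ = ((dd j : ℝ) : ℂ) * ⟪h j, x⟫_ℂ := by
      intro j
      rw [hy, ContinuousLinearMap.adjoint_inner_right, hAh, inner_smul_left,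
        Complex.conj_ofReal]
    have hsum : HasSum (fun j => lam j * ‖⟪h j, y⟫_ℂ‖^2) (Complex.re ⟪y, Cpow y⟫_ℂ) :=
      aux_hasSum h hOn lam Cpow hCpow y
    have hS : Summable fun j => ‖⟪h j, x⟫_ℂ‖^2 := hOn.inner_products_summable x
    have hG : HasSum (fun j => γ^(α-1) * ‖⟪h j, x⟫_ℂ‖^2)
        (γ^(α-1) * ∑' j, ‖⟪h j, x⟫_ℂ‖^2) := hS.hasSum.mul_left _
    have hle : Complex.re ⟪y, Cpow y⟫_ℂ ≤ γ^(α-1) * ∑' j, ‖⟪h j, x⟫_ℂ‖^2 := by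
      refine hasSum_le (fun j => ?_) hsum hG
      rw [hcomp j, norm_mul, mul_pow, Complex.norm_real, Real.norm_eq_abs, sq_abs, ← mul_assoc]
      have := aux_scalar (hσ j) hγ hα1 hα2
      exact mul_le_mul_of_nonneg_right this (by positivity)
    have hle2 : Complex.re ⟪y, Cpow y⟫_ℂ ≤ γ^(α-1) * ‖x‖^2 :=
      hle.trans (mul_le_mul_of_nonneg_left (hOn.tsum_inner_products_le x)
        (Real.rpow_nonneg hγ.le _))
    have hpos := hBB.2 y
    rw [ContinuousLinearMap.reApplyInnerSelf_apply, ContinuousLinearMap.sub_apply,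
      ContinuousLinearMap.smul_apply, ContinuousLinearMap.mul_apply, inner_sub_left,
      inner_smul_left, Complex.conj_ofReal, map_sub] at hpos
    have hBterm : Complex.re ⟪B ((ContinuousLinearMap.adjoint B) y), y⟫_ℂ =
        ‖(ContinuousLinearMap.adjoint B) y‖^2 := by
      rw [← ContinuousLinearMap.adjoint_inner_right, ← RCLike.re_to_complex]
      exact inner_self_eq_norm_sq _
    have hCterm : Complex.re ((((a:ℝ)^2 : ℝ) : ℂ) * ⟪Cpow y, y⟫_ℂ) =
        a^2 * Complex.re ⟪y, Cpow y⟫_ℂ := by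
      rw [Complex.re_ofReal_mul, ← inner_conj_symm y, Complex.conj_re]
    simp only [RCLike.re_to_complex] at hpos
    rw [hBterm, hCterm] at hpos
    calc ‖(ContinuousLinearMap.adjoint B) y‖^2 ≤ a^2 * Complex.re ⟪y, Cpow y⟫_ℂ := by
          linarith
      _ ≤ a^2 * (γ^(α-1) * ‖x‖^2) := by
          have : (0:ℝ) ≤ a^2 := by positivity
          exact mul_le_mul_of_nonneg_left hle2 this
      _ = (a^2 * γ^(α-1)) * ‖x‖^2 := by ring
  -- conclude via operator norms
  have hγ' : (0:ℝ) ≤ γ^(α-1) := Real.rpow_nonneg hγ.le _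
  have hK : (0:ℝ) ≤ a * Real.sqrt (γ^(α-1)) := by positivity
  have hop : ‖(ContinuousLinearMap.adjoint B).comp (ContinuousLinearMap.adjoint A)‖ ≤
      a * Real.sqrt (γ^(α-1)) := by
    refine ContinuousLinearMap.opNorm_le_bound _ hK (fun x => ?_)
    have h1 := main x
    have h2 : ‖(ContinuousLinearMap.adjoint B) ((ContinuousLinearMap.adjoint A) x)‖ =
        Real.sqrt (‖(ContinuousLinearMap.adjoint B) ((ContinuousLinearMap.adjoint A) x)‖^2) :=
      (Real.sqrt_sq (norm_nonneg _)).symm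
    rw [ContinuousLinearMap.comp_apply, h2]
    calc Real.sqrt (‖(ContinuousLinearMap.adjoint B) ((ContinuousLinearMap.adjoint A) x)‖^2)
        ≤ Real.sqrt ((a^2 * γ^(α-1)) * ‖x‖^2) := Real.sqrt_le_sqrt h1
      _ = a * Real.sqrt (γ^(α-1)) * ‖x‖ := by
          rw [Real.sqrt_mul (by positivity), Real.sqrt_mul (by positivity),
            Real.sqrt_sq ha.le, Real.sqrt_sq (norm_nonneg x)]
  have hnorm : ‖A * B‖ = ‖(ContinuousLinearMap.adjoint B).comp (ContinuousLinearMap.adjoint A)‖ := by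
    rw [← ContinuousLinearMap.adjoint_comp]
    exact (ContinuousLinearMap.adjoint.norm_map (A.comp B)).symm
  have hfin : ‖A * B‖ ≤ a * Real.sqrt (γ^(α-1)) := hnorm ▸ hop
  calc ‖A * B‖^2 ≤ (a * Real.sqrt (γ^(α-1)))^2 :=
        pow_le_pow_left₀ (norm_nonneg _) hfin 2
    _ = a^2 * γ^(α-1) := by
        rw [mul_pow, Real.sq_sqrt hγ']
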